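/- arXiv:2402.02774 — 3 statements merged into one kernel-verified Lean document; each statement's English description precedes it below -/
import Mathlib

section
/- Let M = (E, I) be a matroid with weights w : E → ℝ≥0 and let M* = (E, I*) be the set system whose independent sets are exactly the subsets of maximum-weight bases of M. Then M* is a matroid. -/
open Set

/-- The total weight of a set of elements. -/
noncomputable def setWeight {α : Type*} (w : α → NNReal) (S : Set α) : NNReal :=
  ∑ᶠ x ∈ S, w x

/-- A maximum-weight basis of a matroid. -/
def MaxWeightBase {α : Type*} (M : Matroid α) (w : α → NNReal) (B : Set α) : Prop :=
  M.IsBase B ∧ ∀ B', M.IsBase B' → setWeight w B' ≤ setWeight w B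

private lemma setWeight_insert {α : Type*} (w : α → NNReal) {x : α} {A : Set α}
    (hx : x ∉ A) (hA : A.Finite) : setWeight w (insert x A) = w x + setWeight w A :=
  finsum_mem_insert w hx hA

private lemma setWeight_add_diff {α : Type*} (w : α → NNReal) {A B : Set α}
    (h : A ⊆ B) (hB : B.Finite) :
    setWeight w A + setWeight w (B \ A) = setWeight w B := by
  rw [setWeight, setWeight, setWeight, ← finsum_mem_union disjoint_sdiff_right
    (hB.subset h) hB.diff, union_diff_cancel h]

/-- Key lemma: if `B'` is a max-weight base and `x ∈ M.E`, then `x` is in the closure of the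
elements of `B'` of weight at least `w x`. -/
private lemma mem_closure_heavy {α : Type*} (M : Matroid α) [M.Finite] (w : α → NNReal)
    {B' : Set α} (hB' : MaxWeightBase M w B') {x : α} (hx : x ∈ M.E) :
    x ∈ M.closure {e ∈ B' | w x ≤ w e} := by
  set S : Set α := {e ∈ B' | w x ≤ w e} with hS_def
  have hSB' : S ⊆ B' := sep_subset _ _
  have hSE : S ⊆ M.E := hSB'.trans hB'.1.subset_ground
  by_cases hxB' : x ∈ B'
  · exact M.subset_closure S hSE ⟨hxB', le_refl _⟩
  have hxS : x ∉ S := fun h => hxB' h.1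
  have hS_indep : M.Indep S := hB'.1.indep.subset hSB'
  by_contra hcl
  have hI : M.Indep (insert x S) := by
    rw [hS_indep.insert_indep_iff_of_notMem hxS]
    exact ⟨hx, hcl⟩
  obtain ⟨B'', hB'', hIB'', hB''sub⟩ := hI.exists_isBase_subset_union_isBase hB'.1
  have hB'fin : B'.Finite := M.ground_finite.subset hB'.1.subset_ground
  have hB''fin : B''.Finite := M.ground_finite.subset hB''.subset_ground
  have hSfin : S.Finite := hB'fin.subset hSB'
  -- T is the part of B'' outside insert x S
  set T : Set α := B'' \ insert x S with hT_def
  have hTfin : T.Finite := hB''fin.diff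
  have hT_sub : T ⊆ B' \ S := by
    rintro e ⟨heB'', heI⟩
    rcases hB''sub heB'' with h | h
    · exact absurd h heI
    · exact ⟨h, fun hS => heI (mem_insert_of_mem _ hS)⟩
  -- cardinality computations
  have hcard : B''.ncard = B'.ncard := hB''.ncard_eq_ncard_of_isBase hB'.1
  have hins_card : (insert x S).ncard = S.ncard + 1 := ncard_insert_of_notMem hxS hSfin
  have hT_card : T.ncard = B'.ncard - (S.ncard + 1) := by
    rw [hT_def, ncard_diff hIB'' (hSfin.insert x), hins_card, hcard]
  have hBS_card : (B' \ S).ncard = B'.ncard - S.ncard := ncard_diff hSB' hSfin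
  have hle : S.ncard + 1 ≤ B'.ncard := by
    rw [← hins_card, ← hcard]
    exact ncard_le_ncard hIB'' hB''fin
  have hrem_card : ((B' \ S) \ T).ncard = 1 := by
    rw [ncard_diff hT_sub hTfin, hBS_card, hT_card]
    omega
  obtain ⟨z, hz⟩ := ncard_eq_one.mp hrem_card
  have hzmem : z ∈ (B' \ S) \ T := hz ▸ rfl
  -- weight computations
  have hwB'' : setWeight w B'' = w x + setWeight w S + setWeight w T := by
    rw [← setWeight_add_diff w hIB'' hB''fin, setWeight_insert w hxS hSfin, ← hT_def, add_assoc]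
  have hwB' : setWeight w B' = setWeight w S + (setWeight w T + w z) := by
    have hzw : setWeight w {z} = w z := finsum_mem_singleton
    rw [← setWeight_add_diff w hSB' hB'fin, ← setWeight_add_diff w hT_sub hB'fin.diff, hz, hzw]
  have hle2 : setWeight w B'' ≤ setWeight w B' := hB'.2 B'' hB''
  rw [hwB'', hwB'] at hle2
  have hxz : w x ≤ w z := by
    have : w x + (setWeight w S + setWeight w T) ≤ w z + (setWeight w S + setWeight w T) := by
      calc w x + (setWeight w S + setWeight w T) = w x + setWeight w S + setWeight w T := by ring
        _ ≤ setWeight w S + (setWeight w T + w z) := hle2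
        _ = w z + (setWeight w S + setWeight w T) := by ring
    exact le_of_add_le_add_right this
  exact hzmem.1.2 ⟨hzmem.1.1, hxz⟩

theorem stmt_5 {α : Type*} (M : Matroid α) [M.Finite] (w : α → NNReal) :
    ∃ Mstar : Matroid α, Mstar.E = M.E ∧
      ∀ S : Set α, Mstar.Indep S ↔ ∃ B, MaxWeightBase M w B ∧ S ⊆ B := by
  have hEfin : M.E.Finite := M.ground_finite
  -- a max-weight base exists
  have hBfin : {B | M.IsBase B}.Finite :=
    hEfin.finite_subsets.subset (fun B hB => hB.subset_ground)
  obtain ⟨B₀, hB₀, hB₀max⟩ :=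
    Set.exists_max_image {B | M.IsBase B} (setWeight w) hBfin M.exists_isBase
  have exists_base : ∃ B, MaxWeightBase M w B := ⟨B₀, hB₀, hB₀max⟩
  -- the exchange property for max-weight bases
  have base_exchange : Matroid.ExchangeProperty (MaxWeightBase M w) := by
    rintro B B' hB hB' x hx
    have hxE : x ∈ M.E := hB.1.subset_ground hx.1
    set S : Set α := {e ∈ B' | w x ≤ w e} with hS_def
    have hxcl : x ∈ M.closure S := mem_closure_heavy M w hB' hxE
    have hBind : M.Indep (B \ {x}) := hB.1.indep.diff _
    have hxncl : x ∉ M.closure (B \ {x}) :=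
      hB.1.indep.notMem_closure_sdiff_of_mem hx.1
    have hBfin' : B.Finite := hEfin.subset hB.1.subset_ground
    -- find y ∈ S not in the closure of B \ {x}
    have : ¬ S ⊆ M.closure (B \ {x}) := by
      intro hsub
      exact hxncl (M.closure_subset_closure_of_subset_closure hsub hxcl)
    obtain ⟨y, hyS, hycl⟩ := not_subset.mp this
    have hyB' : y ∈ B' := hyS.1
    have hyE : y ∈ M.E := hB'.1.subset_ground hyB'
    have hyB : y ∉ B := by
      intro hyB
      have hyne : y ≠ x := fun h => hx.2 (h ▸ hyB')
      exact hycl (M.subset_closure (B \ {x})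
        (Set.diff_subset.trans hB.1.subset_ground) ⟨hyB, hyne⟩)
    have hynB : y ∉ B \ {x} := fun h => hyB h.1
    have hIy : M.Indep (insert y (B \ {x})) :=
      ((hBind.notMem_closure_iff_of_notMem hynB hyE).mp hycl)
    have hBase : M.IsBase (insert y (B \ {x})) := hB.1.exchange_isBase_of_indep hyB hIy
    refine ⟨y, ⟨hyB', hyB⟩, hBase, ?_⟩
    intro B₂ hB₂
    have hxB : x ∈ B := hx.1
    have h1 : setWeight w B = w x + setWeight w (B \ {x}) := by
      have heq : insert x (B \ {x}) = B := insert_diff_singleton.trans (insert_eq_self.mpr hxB)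
      conv_lhs => rw [← heq]
      exact setWeight_insert w (fun h => h.2 rfl) hBfin'.diff
    have h2 : setWeight w (insert y (B \ {x})) = w y + setWeight w (B \ {x}) :=
      setWeight_insert w hynB hBfin'.diff
    calc setWeight w B₂ ≤ setWeight w B := hB.2 B₂ hB₂
      _ = w x + setWeight w (B \ {x}) := h1
      _ ≤ w y + setWeight w (B \ {x}) := add_le_add_left hyS.2 _
      _ = setWeight w (insert y (B \ {x})) := h2.symm
  have subset_ground : ∀ B, MaxWeightBase M w B → B ⊆ M.E := fun B hB => hB.1.subset_ground
  refine ⟨Matroid.ofIsBaseOfFinite hEfin (MaxWeightBase M w) exists_base base_exchange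
    subset_ground, rfl, fun S => ?_⟩
  rw [Matroid.indep_iff]
  simp [Matroid.ofIsBaseOfFinite_isBase]
end

section
/- Let M = (E, I) be a matroid with weights w : E → ℝ≥0, and let B and B* be two maximum-weight bases of M. For a real number t, let B_{>t} = {e ∈ B : w(e) > t}. Then for every t, |B_{>t}| = |B*_{>t}|. -/
open Set

private lemma key_le {α : Type*} (M : Matroid α) [M.Finite]
    (w : α → NNReal) (B Bstar : Set α)
    (hB : MaxWeightBase M w B) (hBstar : MaxWeightBase M w Bstar) (t : NNReal) :
    {x ∈ B | t < w x}.ncard ≤ {x ∈ Bstar | t < w x}.ncard := by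
  by_contra h
  push_neg at h
  set I := {x ∈ Bstar | t < w x} with hIdef
  set J := {x ∈ B | t < w x} with hJdef
  have hBfin : B.Finite := M.set_finite B hB.1.subset_ground
  have hBsfin : Bstar.Finite := M.set_finite Bstar hBstar.1.subset_ground
  have hIfin : I.Finite := hBsfin.subset (sep_subset _ _)
  have hJfin : J.Finite := hBfin.subset (sep_subset _ _)
  have hI : M.Indep I := hBstar.1.indep.subset (sep_subset _ _)
  have hJ : M.Indep J := hB.1.indep.subset (sep_subset _ _)
  have hcard : I.encard < J.encard := by
    rw [← hIfin.cast_ncard_eq, ← hJfin.cast_ncard_eq]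
    exact_mod_cast h
  obtain ⟨e, heJI, hind⟩ := hI.augment hJ hcard
  have hewt : t < w e := heJI.1.2
  have heB : e ∈ B := heJI.1.1
  have heBs : e ∉ Bstar := fun h' => heJI.2 ⟨h', hewt⟩
  obtain ⟨B', hB', hIB', hB'sub⟩ := hind.exists_isBase_subset_union_isBase hBstar.1
  have heB' : e ∈ B' := hIB' (mem_insert _ _)
  have hB'sub' : B' ⊆ insert e Bstar := by
    refine hB'sub.trans ?_
    rintro x (hx | hx)
    · rcases hx with hx | hx
      · exact hx ▸ mem_insert _ _
      · exact Or.inr hx.1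
    · exact Or.inr hx
  have hB'fin : B'.Finite := M.set_finite B' hB'.subset_ground
  have hcard' : B'.ncard = Bstar.ncard := hB'.ncard_eq_ncard_of_isBase hBstar.1
  -- find an element of Bstar missing from B'
  have hex : ∃ f ∈ Bstar, f ∉ B' := by
    by_contra hc
    push_neg at hc
    have : insert e Bstar ⊆ B' := insert_subset heB' hc
    have heq : B' = insert e Bstar := subset_antisymm hB'sub' this
    have := Set.ncard_insert_of_notMem heBs hBsfin
    rw [← heq, hcard'] at this
    omega
  obtain ⟨f, hfBs, hfB'⟩ := hex
  have hef : e ≠ f := fun h => heBs (h ▸ hfBs)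
  have henD : e ∉ Bstar \ {f} := fun h => heBs h.1
  have hDfin : (Bstar \ {f}).Finite := hBsfin.diff
  have hcardD : (insert e (Bstar \ {f})).ncard = Bstar.ncard := by
    rw [Set.ncard_insert_of_notMem henD hDfin,
      Set.ncard_diff_singleton_add_one hfBs hBsfin]
  have hB'eq : B' = insert e (Bstar \ {f}) := by
    apply Set.eq_of_subset_of_ncard_le
    · intro x hx
      rcases hB'sub' hx with h1 | h1
      · exact h1 ▸ mem_insert _ _
      · exact Or.inr ⟨h1, fun hxf => hfB' (mem_singleton_iff.mp hxf ▸ hx)⟩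
    · rw [hcardD, hcard']
    · exact hDfin.insert e
  -- f has small weight
  have hfI : f ∉ I := fun h => hfB' (hIB' (Or.inr h))
  have hfwt : w f ≤ t := by
    by_contra hc
    exact hfI ⟨hfBs, lt_of_not_ge hc⟩
  -- weight computations
  have hwB' : setWeight w B' = w e + setWeight w (Bstar \ {f}) := by
    rw [hB'eq]
    exact finsum_mem_insert w henD hDfin
  have hwBs : setWeight w Bstar = w f + setWeight w (Bstar \ {f}) := by
    have : Bstar = insert f (Bstar \ {f}) := by
      rw [Set.insert_diff_singleton, Set.insert_eq_self.mpr hfBs]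
    conv_lhs => rw [this]
    exact finsum_mem_insert w (fun h => h.2 rfl) hDfin
  have hlt : setWeight w Bstar < setWeight w B' := by
    rw [hwB', hwBs]
    exact add_lt_add_left (lt_of_le_of_lt hfwt hewt) _
  exact absurd (hBstar.2 B' hB') (not_le.mpr hlt)

theorem stmt_17 {α : Type*} (M : Matroid α) [M.Finite]
    (w : α → NNReal) (B Bstar : Set α)
    (hB : MaxWeightBase M w B) (hBstar : MaxWeightBase M w Bstar) :
    ∀ t : NNReal, {x ∈ B | t < w x}.ncard = {x ∈ Bstar | t < w x}.ncard := by
  intro t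
  exact le_antisymm (key_le M w B Bstar hB hBstar t) (key_le M w Bstar B hBstar hB t)
end

section
/- Let M = (E, I) be a matroid with weights w : E → ℝ≥0 and elements E = {e₁,…,e_n} ordered by non-increasing weight. Let B be a basis of M such that for every k ∈ {1,…,n}, B_{≤k} is a maximum-cardinality independent subset of E_{≤k}. Then B is a maximum-weight basis of M. -/
open Set

open Finset in
lemma orderEmb_le_of_card_filter {β : Type*} [LinearOrder β] (s : Finset β)
    (i : Fin s.card) (x : β) (h : (i : ℕ) + 1 ≤ (s.filter (· ≤ x)).card) :
    s.orderEmbOfFin rfl i ≤ x := by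
  by_contra hlt
  push_neg at hlt
  have hsub : s.filter (· ≤ x) ⊆ (Finset.Iio i).image (s.orderEmbOfFin rfl) := by
    intro y hy
    rw [Finset.mem_filter] at hy
    obtain ⟨j, hj⟩ : ∃ j, s.orderEmbOfFin rfl j = y := by
      have : y ∈ Set.range (s.orderEmbOfFin rfl) := by
        rw [Finset.range_orderEmbOfFin]; exact hy.1
      exact this
    have hji : j < i := by
      have := (s.orderEmbOfFin rfl).strictMono.lt_iff_lt (a := j) (b := i)
      rw [← this]
      calc s.orderEmbOfFin rfl j = y := hj
        _ ≤ x := hy.2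
        _ < s.orderEmbOfFin rfl i := hlt
    exact Finset.mem_image.2 ⟨j, Finset.mem_Iio.2 hji, hj⟩
  have hcard := Finset.card_le_card hsub
  have : ((Finset.Iio i).image (s.orderEmbOfFin rfl)).card ≤ (i : ℕ) := by
    calc ((Finset.Iio i).image (s.orderEmbOfFin rfl)).card ≤ (Finset.Iio i).card :=
          Finset.card_image_le
      _ = (i : ℕ) := Fin.card_Iio i
  omega

lemma sum_le_of_prefix_dom {n : ℕ} (f : Fin n → NNReal)
    (hf : ∀ i j : Fin n, i ≤ j → f j ≤ f i)
    (b b' : Finset (Fin n))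
    (hdom : ∀ k : Fin n, (b'.filter (· ≤ k)).card ≤ (b.filter (· ≤ k)).card) :
    ∑ j ∈ b', f j ≤ ∑ j ∈ b, f j := by
  rcases n with _ | m
  · have : b' = ∅ := Finset.eq_empty_of_forall_notMem (fun x _ => x.elim0)
    simp [this]
  have hcard : b'.card ≤ b.card := by
    have h1 : b'.filter (· ≤ Fin.last m) = b' :=
      Finset.filter_true_of_mem (fun x _ => Fin.le_last x)
    have h2 : b.filter (· ≤ Fin.last m) = b :=
      Finset.filter_true_of_mem (fun x _ => Fin.le_last x)
    have := hdom (Fin.last m)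
    rwa [h1, h2] at this
  set g' := b'.orderEmbOfFin rfl with hg'
  set g := b.orderEmbOfFin rfl with hg
  -- key pointwise comparison
  have key : ∀ i : Fin b'.card, g (Fin.castLE hcard i) ≤ g' i := by
    intro i
    have h1 : (i : ℕ) + 1 ≤ (b'.filter (· ≤ g' i)).card := by
      have hsub : (Finset.Iic i).image g' ⊆ b'.filter (· ≤ g' i) := by
        intro y hy
        obtain ⟨j, hj, rfl⟩ := Finset.mem_image.1 hy
        refine Finset.mem_filter.2 ⟨Finset.orderEmbOfFin_mem _ _ _, ?_⟩
        exact g'.monotone (Finset.mem_Iic.1 hj)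
      calc (i : ℕ) + 1 = (Finset.Iic i).card := (Fin.card_Iic i).symm
        _ = ((Finset.Iic i).image g').card :=
            (Finset.card_image_of_injective _ g'.injective).symm
        _ ≤ (b'.filter (· ≤ g' i)).card := Finset.card_le_card hsub
    have h2 : ((Fin.castLE hcard i : Fin b.card) : ℕ) + 1 ≤ (b.filter (· ≤ g' i)).card :=
      le_trans h1 (hdom (g' i))
    exact orderEmb_le_of_card_filter b _ (g' i) h2
  have hb' : Finset.image g' Finset.univ = b' := by
    apply Finset.coe_injective
    rw [Finset.coe_image, Finset.coe_univ, Set.image_univ, hg', Finset.range_orderEmbOfFin]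
  have hb : Finset.image g Finset.univ = b := by
    apply Finset.coe_injective
    rw [Finset.coe_image, Finset.coe_univ, Set.image_univ, hg, Finset.range_orderEmbOfFin]
  have e1 : ∑ j ∈ b', f j = ∑ i : Fin b'.card, f (g' i) := by
    have := Finset.sum_image (s := Finset.univ) (g := g') (f := f)
      (fun x _ y _ h => g'.injective h)
    rw [hb'] at this
    exact this
  have e2 : ∑ i : Fin b.card, f (g i) = ∑ j ∈ b, f j := by
    have := Finset.sum_image (s := Finset.univ) (g := g) (f := f)
      (fun x _ y _ h => g.injective h)
    rw [hb] at this
    exact this.symm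
  calc ∑ j ∈ b', f j = ∑ i : Fin b'.card, f (g' i) := e1
    _ ≤ ∑ i : Fin b'.card, f (g (Fin.castLE hcard i)) :=
        Finset.sum_le_sum (fun i _ => hf _ _ (key i))
    _ = ∑ i ∈ Finset.image (Fin.castLE hcard) Finset.univ, f (g i) := by
        rw [Finset.sum_image (fun x _ y _ h => Fin.castLE_injective hcard h)]
    _ ≤ ∑ i : Fin b.card, f (g i) :=
        Finset.sum_le_sum_of_subset (Finset.subset_univ _)
    _ = ∑ j ∈ b, f j := e2

theorem stmt_19 {α : Type*} (M : Matroid α) [M.Finite] (w : α → NNReal)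
    (n : ℕ) (e : Fin n → α) (hinj : Function.Injective e)
    (hground : M.E = Set.range e)
    (hmono : ∀ i j : Fin n, i ≤ j → w (e j) ≤ w (e i))
    (B : Set α) (hB : M.IsBase B)
    (hpre : ∀ k : Fin n,
      M.Indep {x ∈ B | ∃ j : Fin n, j ≤ k ∧ x = e j} ∧
      ∀ I, I ⊆ e '' {j | j ≤ k} → M.Indep I →
        I.ncard ≤ {x ∈ B | ∃ j : Fin n, j ≤ k ∧ x = e j}.ncard) :
    MaxWeightBase M w B := by
  classical
  -- translate a subset of the ground set to a finset of indices
  have toIdx : ∀ S : Set α, S ⊆ Set.range e →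
      S = e '' ↑(Finset.univ.filter (fun j => e j ∈ S)) := by
    intro S hS
    ext x
    simp only [Finset.coe_filter, Finset.mem_univ, true_and, Set.mem_image, Set.mem_setOf_eq]
    constructor
    · intro hx
      obtain ⟨j, rfl⟩ := hS hx
      exact ⟨j, hx, rfl⟩
    · rintro ⟨j, hj, rfl⟩; exact hj
  have weightEq : ∀ S : Set α, S ⊆ Set.range e →
      setWeight w S = ∑ j ∈ Finset.univ.filter (fun j => e j ∈ S), w (e j) := by
    intro S hS
    rw [setWeight]
    conv_lhs => rw [toIdx S hS]
    rw [finsum_mem_image (hinj.injOn), finsum_mem_coe_finset]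
  -- prefix sets as images
  have prefEq : ∀ (S : Set α), S ⊆ Set.range e → ∀ k : Fin n,
      {x ∈ S | ∃ j : Fin n, j ≤ k ∧ x = e j} =
        e '' ↑((Finset.univ.filter (fun j => e j ∈ S)).filter (· ≤ k)) := by
    intro S hS k
    ext x
    simp only [Set.mem_setOf_eq, Finset.coe_filter, Finset.mem_filter, Finset.mem_univ,
      true_and, Set.mem_image]
    constructor
    · rintro ⟨hx, j, hjk, rfl⟩
      exact ⟨j, ⟨hx, hjk⟩, rfl⟩
    · rintro ⟨j, ⟨hj, hjk⟩, rfl⟩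
      exact ⟨hj, j, hjk, rfl⟩
  refine ⟨hB, fun B' hB' => ?_⟩
  have hBsub : B ⊆ Set.range e := hground ▸ hB.subset_ground
  have hB'sub : B' ⊆ Set.range e := hground ▸ hB'.subset_ground
  set b := Finset.univ.filter (fun j => e j ∈ B) with hbdef
  set b' := Finset.univ.filter (fun j => e j ∈ B') with hb'def
  rw [weightEq B hBsub, weightEq B' hB'sub]
  apply sum_le_of_prefix_dom _ hmono
  intro k
  have hI : M.Indep {x ∈ B' | ∃ j : Fin n, j ≤ k ∧ x = e j} :=
    hB'.indep.subset (fun x hx => hx.1)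
  have hIsub : {x ∈ B' | ∃ j : Fin n, j ≤ k ∧ x = e j} ⊆ e '' {j | j ≤ k} := by
    rintro x ⟨_, j, hjk, rfl⟩
    exact ⟨j, hjk, rfl⟩
  have hle := (hpre k).2 _ hIsub hI
  rwa [prefEq B hBsub k, prefEq B' hB'sub k, Set.ncard_image_of_injective _ hinj,
    Set.ncard_image_of_injective _ hinj, Set.ncard_coe_finset, Set.ncard_coe_finset] at hle
end
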